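/- Let X be a real symmetric k×k matrix such that tr(X·p(X)²) ≥ 0 for every univariate real polynomial p. Then X is positive semidefinite. -/

import Mathlib

open Matrix Polynomial

lemma aeval_diag {n : ℕ} (d : Fin n → ℝ) (p : ℝ[X]) :
    aeval (Matrix.diagonal d) p = Matrix.diagonal (fun i => p.eval (d i)) := by
  induction p using Polynomial.induction_on' with
  | add p q hp hq =>
    simp [hp, hq, Matrix.diagonal_add]
  | monomial m a =>
    simp [aeval_monomial, Algebra.algebraMap_eq_smul_one, Matrix.diagonal_pow,
      Matrix.smul_eq_diagonal_mul, Matrix.diagonal_mul_diagonal]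

lemma aeval_conj {n : ℕ} (U V M : Matrix (Fin n) (Fin n) ℝ)
    (hUV : U * V = 1) (hVU : V * U = 1) (p : ℝ[X]) :
    aeval (U * M * V) p = U * aeval M p * V := by
  have hpow : ∀ m : ℕ, (U * M * V) ^ m = U * M ^ m * V := by
    intro m
    induction m with
    | zero => rw [pow_zero, pow_zero, Matrix.mul_one, hUV]
    | succ m ih =>
        rw [pow_succ, ih, pow_succ]
        calc U * M ^ m * V * (U * M * V) = U * M ^ m * (V * U) * M * V := by
              noncomm_ring
          _ = U * (M ^ m * M) * V := by rw [hVU]; noncomm_ring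
  induction p using Polynomial.induction_on' with
  | add p q hp hq => simp [hp, hq, Matrix.mul_add, Matrix.add_mul]
  | monomial m a =>
    simp only [aeval_monomial, hpow, Algebra.algebraMap_eq_smul_one]
    simp [smul_mul_assoc, mul_smul_comm]

theorem stmt_11 (k : ℕ) (X : Matrix (Fin k) (Fin k) ℝ) (hX : X.IsSymm)
    (h : ∀ p : Polynomial ℝ, 0 ≤ (X * (Polynomial.aeval X p)^2).trace) :
    X.PosSemidef := by
  have hH : X.IsHermitian := by
    rwa [Matrix.IsHermitian, Matrix.conjTranspose_eq_transpose_of_trivial]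
  set d : Fin k → ℝ := hH.eigenvalues with hd
  set U : Matrix (Fin k) (Fin k) ℝ := (hH.eigenvectorUnitary : Matrix (Fin k) (Fin k) ℝ) with hU
  have hUV : U * star U = 1 := (Matrix.mem_unitaryGroup_iff).mp hH.eigenvectorUnitary.2
  have hVU : star U * U = 1 := (Matrix.mem_unitaryGroup_iff').mp hH.eigenvectorUnitary.2
  have hspec : X = U * Matrix.diagonal d * star U := by
    have := hH.spectral_theorem
    simpa using this
  -- key trace formula
  have key : ∀ p : ℝ[X],
      (X * (aeval X p)^2).trace = ∑ j, d j * (p.eval (d j))^2 := by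
    intro p
    have h1 : aeval X p = U * Matrix.diagonal (fun i => p.eval (d i)) * star U := by
      rw [hspec, aeval_conj U (star U) _ hUV hVU, aeval_diag]
    rw [h1, hspec]
    have h2 : (U * Matrix.diagonal (fun i => p.eval (d i)) * star U) ^ 2
        = U * Matrix.diagonal (fun i => (p.eval (d i))^2) * star U := by
      rw [sq]
      calc (U * Matrix.diagonal (fun i => p.eval (d i)) * star U) *
            (U * Matrix.diagonal (fun i => p.eval (d i)) * star U)
          = U * Matrix.diagonal (fun i => p.eval (d i)) * (star U * U) *
            Matrix.diagonal (fun i => p.eval (d i)) * star U := by noncomm_ring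
        _ = U * (Matrix.diagonal (fun i => p.eval (d i)) *
            Matrix.diagonal (fun i => p.eval (d i))) * star U := by rw [hVU]; noncomm_ring
        _ = _ := by rw [Matrix.diagonal_mul_diagonal]; congr 2; funext i; ring
    rw [h2]
    have h3 : U * Matrix.diagonal d * star U * (U * Matrix.diagonal (fun i => (p.eval (d i))^2) * star U)
        = U * Matrix.diagonal (fun i => d i * (p.eval (d i))^2) * star U := by
      calc U * Matrix.diagonal d * star U * (U * Matrix.diagonal (fun i => (p.eval (d i))^2) * star U)
          = U * Matrix.diagonal d * (star U * U) *
            Matrix.diagonal (fun i => (p.eval (d i))^2) * star U := by noncomm_ring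
        _ = U * (Matrix.diagonal d * Matrix.diagonal (fun i => (p.eval (d i))^2)) * star U := by
            rw [hVU]; noncomm_ring
        _ = _ := by rw [Matrix.diagonal_mul_diagonal]
    rw [h3, Matrix.trace_mul_cycle, hVU, Matrix.one_mul, Matrix.trace_diagonal]
  -- show all eigenvalues nonneg
  apply hH.posSemidef_iff_eigenvalues_nonneg.mpr
  intro i
  by_contra hneg
  push_neg at hneg
  change d i < 0 at hneg
  -- Lagrange-type polynomial
  set S : Finset ℝ := (Finset.univ.image d).erase (d i) with hS
  set p : ℝ[X] := ∏ v ∈ S, (Polynomial.C (d i - v)⁻¹ * (Polynomial.X - Polynomial.C v)) with hp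
  have hpeval : ∀ j, p.eval (d j) = if d j = d i then 1 else 0 := by
    intro j
    by_cases hji : d j = d i
    · rw [if_pos hji, hp]
      rw [Polynomial.eval_prod]
      apply Finset.prod_eq_one
      intro v hv
      have hne : d i ≠ v := (Finset.ne_of_mem_erase hv).symm
      simp only [Polynomial.eval_mul, Polynomial.eval_C, Polynomial.eval_sub, Polynomial.eval_X,
        hji]
      rw [inv_mul_cancel₀ (sub_ne_zero.mpr hne)]
    · rw [if_neg hji, hp, Polynomial.eval_prod]
      apply Finset.prod_eq_zero (i := d j)
      · rw [hS]
        exact Finset.mem_erase.mpr ⟨hji, Finset.mem_image_of_mem d (Finset.mem_univ j)⟩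
      · simp
  have htr := h p
  rw [key p] at htr
  have hsum : ∑ j, d j * (p.eval (d j))^2
      = ∑ j ∈ Finset.univ.filter (fun j => d j = d i), d i := by
    rw [Finset.sum_filter]
    apply Finset.sum_congr rfl
    intro j _
    rw [hpeval j]
    by_cases hji : d j = d i <;> simp [hji]
  rw [hsum, Finset.sum_const, nsmul_eq_mul] at htr
  have hcard : 0 < ((Finset.univ.filter (fun j => d j = d i)).card : ℝ) := by
    have : i ∈ Finset.univ.filter (fun j => d j = d i) := by simp
    have := Finset.card_pos.mpr ⟨i, this⟩
    exact_mod_cast this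
  nlinarith
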